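/- Let $g_n$, $n \in \mathbb{Z}$, satisfy $|g_n| \le D r^{|n|}$ for some $D > 0$, $0 < r < 1$, and define $c_m = \frac{1}{m!} \sum_{n \in \mathbb{Z}} (in)^m g_n$ for $m \ge 1$. Then $|c_m| \le \frac{2D}{r} \left(\ln \frac{1}{r}\right)^{-m-1}$ for all $m \ge 1$. -/

import Mathlib

open Set MeasureTheory intervalIntegral Real

lemma aux_integrable {m : ℕ} {a : ℝ} (ha : 0 < a) :
    IntegrableOn (fun x : ℝ => x ^ m * Real.exp (-(a * x))) (Ioi 0) := by
  have h := integrableOn_rpow_mul_exp_neg_mul_rpow (s := (m : ℝ)) (p := 1)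
    (lt_of_lt_of_le neg_one_lt_zero (Nat.cast_nonneg m)) one_pos ha
  refine h.congr_fun (fun x _ => ?_) measurableSet_Ioi
  simp [Real.rpow_natCast, neg_mul]

lemma aux_integral_val {m : ℕ} {a : ℝ} (ha : 0 < a) :
    ∫ x in Ioi (0:ℝ), x ^ m * Real.exp (-(a * x)) = m.factorial / a ^ (m + 1) := by
  have h := Real.integral_rpow_mul_exp_neg_mul_Ioi (a := (m : ℝ) + 1) (r := a)
    (by positivity) ha
  have h2 : ∫ x in Ioi (0:ℝ), x ^ m * Real.exp (-(a * x))
      = ∫ t in Ioi (0:ℝ), t ^ ((m : ℝ) + 1 - 1) * Real.exp (-(a * t)) := by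
    refine setIntegral_congr_fun measurableSet_Ioi (fun x _ => ?_)
    rw [add_sub_cancel_right, Real.rpow_natCast]
  rw [h2, h, Real.Gamma_nat_eq_factorial]
  have : ((1:ℝ)/a) ^ ((m:ℝ) + 1) = (1/a) ^ (m+1) := by
    rw [show ((m:ℝ) + 1) = ((m+1 : ℕ) : ℝ) by push_cast; ring, Real.rpow_natCast]
  rw [this]
  field_simp
  rw [← mul_pow, one_div, inv_mul_cancel₀ ha.ne', one_pow]

lemma aux_tsum_le (m : ℕ) {r : ℝ} (hr0 : 0 < r) (hr1 : r < 1) :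
    ∑' n : ℕ, (n : ℝ) ^ m * r ^ n
      ≤ m.factorial / (r * Real.log (1 / r) ^ (m + 1)) := by
  set a : ℝ := Real.log (1 / r) with ha_def
  have ha : 0 < a := Real.log_pos (one_lt_one_div hr0 hr1)
  have hra : Real.exp (-a) = r := by
    rw [ha_def, one_div, Real.log_inv, neg_neg, Real.exp_log hr0]
  set F : ℝ → ℝ := fun x => x ^ m * Real.exp (-(a * x)) with hF
  have contF : Continuous F := by fun_prop
  have hFnn : ∀ x ∈ Ioi (0:ℝ), 0 ≤ F x := fun x hx => by
    have : (0:ℝ) < x := hx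
    positivity
  -- per-term bound
  have hterm : ∀ n : ℕ, (n : ℝ) ^ m * r ^ n ≤ (1 / r) * ∫ x in (n : ℝ)..(n + 1 : ℝ), F x := by
    intro n
    have hle : (n : ℝ) ≤ (n : ℝ) + 1 := by linarith
    have hmono : ∫ x in (n : ℝ)..(n + 1 : ℝ), ((n : ℝ) ^ m * r ^ (n + 1))
        ≤ ∫ x in (n : ℝ)..(n + 1 : ℝ), F x := by
      refine intervalIntegral.integral_mono_on hle intervalIntegrable_const
        (contF.intervalIntegrable _ _) (fun x hx => ?_)
      obtain ⟨hx1, hx2⟩ := hx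
      have hxnn : (0:ℝ) ≤ x := le_trans (Nat.cast_nonneg n) hx1
      have h1 : (n : ℝ) ^ m ≤ x ^ m := pow_le_pow_left₀ (Nat.cast_nonneg n) hx1 m
      have h2 : r ^ (n + 1) ≤ Real.exp (-(a * x)) := by
        rw [← hra, ← Real.exp_nat_mul]
        apply Real.exp_le_exp.mpr
        push_cast
        nlinarith [ha.le]
      calc (n : ℝ) ^ m * r ^ (n + 1) ≤ x ^ m * Real.exp (-(a * x)) := by
            apply mul_le_mul h1 h2 (by positivity) (by positivity)
        _ = F x := rfl
    rw [intervalIntegral.integral_const, smul_eq_mul] at hmono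
    have : ((n:ℝ) + 1 - n) = 1 := by ring
    rw [this, one_mul] at hmono
    have hr' : r ≠ 0 := ne_of_gt hr0
    calc (n : ℝ) ^ m * r ^ n = (1/r) * ((n:ℝ) ^ m * r ^ (n+1)) := by
          field_simp; ring
      _ ≤ (1 / r) * ∫ x in (n : ℝ)..(n + 1 : ℝ), F x := by
          apply mul_le_mul_of_nonneg_left hmono (by positivity)
  -- partial sums bound
  have hpartial : ∀ N : ℕ, ∑ n ∈ Finset.range N, (n : ℝ) ^ m * r ^ n
      ≤ m.factorial / (r * a ^ (m + 1)) := by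
    intro N
    have hsum : ∑ n ∈ Finset.range N, (n : ℝ) ^ m * r ^ n
        ≤ (1/r) * ∑ n ∈ Finset.range N, ∫ x in (n : ℝ)..(n + 1 : ℝ), F x := by
      rw [Finset.mul_sum]
      exact Finset.sum_le_sum (fun n _ => hterm n)
    have hadj : ∑ n ∈ Finset.range N, (∫ x in ((n : ℕ) : ℝ)..((n + 1 : ℕ) : ℝ), F x)
        = ∫ x in ((0:ℕ) : ℝ)..((N : ℕ) : ℝ), F x := by
      apply intervalIntegral.sum_integral_adjacent_intervals
      intro k _
      exact contF.intervalIntegrable _ _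
    have hcast : ∑ n ∈ Finset.range N, (∫ x in (n : ℝ)..(n + 1 : ℝ), F x)
        = ∑ n ∈ Finset.range N, (∫ x in ((n : ℕ) : ℝ)..((n + 1 : ℕ) : ℝ), F x) := by
      refine Finset.sum_congr rfl (fun n _ => ?_)
      norm_num
    have hIoi : ∫ x in ((0:ℕ) : ℝ)..((N : ℕ) : ℝ), F x ≤ ∫ x in Ioi (0:ℝ), F x := by
      rw [intervalIntegral.integral_of_le (by exact_mod_cast N.zero_le), Nat.cast_zero]
      apply setIntegral_mono_set (aux_integrable ha)
      · filter_upwards [ae_restrict_mem measurableSet_Ioi] with x hx using hFnn x hx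
      · exact HasSubset.Subset.eventuallyLE Ioc_subset_Ioi_self
    calc ∑ n ∈ Finset.range N, (n : ℝ) ^ m * r ^ n
        ≤ (1/r) * ∑ n ∈ Finset.range N, ∫ x in (n : ℝ)..(n + 1 : ℝ), F x := hsum
      _ = (1/r) * ∫ x in ((0:ℕ) : ℝ)..((N : ℕ) : ℝ), F x := by rw [hcast, hadj]
      _ ≤ (1/r) * ∫ x in Ioi (0:ℝ), F x := by
          apply mul_le_mul_of_nonneg_left hIoi (by positivity)
      _ = (1/r) * (m.factorial / a ^ (m + 1)) := by rw [aux_integral_val ha]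
      _ = m.factorial / (r * a ^ (m + 1)) := by
          field_simp
  exact tsum_le_of_sum_range_le (fun n => by positivity) hpartial

theorem maclaurin_coeff_bound
    (g : ℤ → ℂ) (c : ℕ → ℂ) (D r : ℝ) (hD : 0 < D) (hr0 : 0 < r) (hr1 : r < 1)
    (hg : ∀ n : ℤ, ‖g n‖ ≤ D * r ^ n.natAbs)
    (hc : ∀ m : ℕ, c m = (1 / (Nat.factorial m) : ℂ) *
      ∑' n : ℤ, (Complex.I * (n : ℂ)) ^ m * g n) :
    ∀ m : ℕ, 1 ≤ m →
      ‖c m‖ ≤ (2 * D / r) * Real.log (1 / r) ^ (-(m : ℤ) - 1) := by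
  intro m hm
  set a : ℝ := Real.log (1 / r) with ha_def
  have ha : 0 < a := Real.log_pos (one_lt_one_div hr0 hr1)
  set h : ℤ → ℝ := fun n => D * ((n.natAbs : ℝ) ^ m * r ^ n.natAbs) with hh
  -- pointwise bound
  have habs : ∀ n : ℤ, ‖(Complex.I * (n : ℂ)) ^ m * g n‖ ≤ h n := by
    intro n
    rw [norm_mul, norm_pow, norm_mul]
    have h1 : ‖(Complex.I : ℂ)‖ = 1 := Complex.norm_I
    have h2 : ‖((n : ℤ) : ℂ)‖ = (n.natAbs : ℝ) := by
      rw [Complex.norm_intCast, Nat.cast_natAbs, Int.cast_abs]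
    rw [h1, h2, one_mul, hh]
    calc (n.natAbs : ℝ) ^ m * ‖g n‖ ≤ (n.natAbs : ℝ) ^ m * (D * r ^ n.natAbs) := by
          apply mul_le_mul_of_nonneg_left (hg n) (by positivity)
      _ = D * ((n.natAbs : ℝ) ^ m * r ^ n.natAbs) := by ring
  -- summability
  have hrn : ‖r‖ < 1 := by rw [Real.norm_eq_abs, abs_of_pos hr0]; exact hr1
  have hsumN : Summable (fun n : ℕ => (n : ℝ) ^ m * r ^ n) :=
    summable_pow_mul_geometric_of_norm_lt_one m hrn
  have hsumN' : Summable (fun n : ℕ => h n) := by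
    simpa [hh] using hsumN.mul_left D
  have hsumN'' : Summable (fun n : ℕ => h (-(n + 1))) := by
    have : Summable (fun n : ℕ => h ((n : ℤ) + 1)) := by
      have := (hsumN.mul_left D).comp_injective (add_right_injective 1)
      refine (hsumN'.comp_injective (add_left_injective 1)).congr (fun n => ?_)
      simp only [Function.comp_apply, Nat.cast_add, Nat.cast_one]
    refine this.congr (fun n => ?_)
    have e : (-(((n:ℕ):ℤ) + 1)).natAbs = (((n:ℕ):ℤ) + 1).natAbs := by omega
    simp only [hh, e]
  have hsumZ : Summable h := Summable.of_nat_of_neg_add_one hsumN' hsumN''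
  have hsumnorm : Summable (fun n : ℤ => ‖(Complex.I * (n : ℂ)) ^ m * g n‖) :=
    Summable.of_nonneg_of_le (fun n => norm_nonneg _) habs hsumZ
  -- tsum over ℤ bounded by 2 * tsum over ℕ
  have htsumZ : ∑' n : ℤ, h n ≤ 2 * ∑' n : ℕ, D * ((n : ℝ) ^ m * r ^ n) := by
    rw [tsum_of_nat_of_neg_add_one hsumN' hsumN'']
    have heq : ∑' n : ℕ, h (-(n + 1)) = ∑' n : ℕ, h ((n : ℤ) + 1) := by
      refine tsum_congr (fun n => ?_)
      have e : (-(((n:ℕ):ℤ) + 1)).natAbs = (((n:ℕ):ℤ) + 1).natAbs := by omega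
      simp only [hh, e]
    have hle1 : ∑' n : ℕ, h ((n : ℤ) + 1) ≤ ∑' n : ℕ, h n := by
      have := (Summable.tsum_eq_zero_add hsumN').symm
      have h0 : (0:ℝ) ≤ h 0 := by positivity
      calc ∑' n : ℕ, h ((n : ℤ) + 1) = ∑' n : ℕ, h ((n : ℕ) + 1 : ℕ) := by
            refine tsum_congr (fun n => ?_); norm_cast
        _ ≤ h 0 + ∑' n : ℕ, h ((n : ℕ) + 1 : ℕ) := le_add_of_nonneg_left h0
        _ = ∑' n : ℕ, h n := (Summable.tsum_eq_zero_add hsumN').symm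
    have heqN : ∀ n : ℕ, h n = D * ((n : ℝ) ^ m * r ^ n) := by
      intro n; simp [hh]
    have hN : ∑' n : ℕ, h n = ∑' n : ℕ, D * ((n : ℝ) ^ m * r ^ n) :=
      tsum_congr heqN
    rw [heq, ← hN]
    linarith [hle1]
  -- main chain
  rw [hc m]
  rw [norm_mul]
  have hfac : ‖(1 / (Nat.factorial m : ℂ))‖ = 1 / (Nat.factorial m : ℝ) := by
    rw [norm_div, norm_one]
    congr 1
    rw [Complex.norm_natCast]
  rw [hfac]
  have hnorm : ‖∑' n : ℤ, (Complex.I * (n : ℂ)) ^ m * g n‖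
      ≤ ∑' n : ℤ, h n := by
    calc ‖∑' n : ℤ, (Complex.I * (n : ℂ)) ^ m * g n‖
        ≤ ∑' n : ℤ, ‖(Complex.I * (n : ℂ)) ^ m * g n‖ := norm_tsum_le_tsum_norm hsumnorm
      _ ≤ ∑' n : ℤ, h n := Summable.tsum_le_tsum habs hsumnorm hsumZ
  have hbound : ∑' n : ℕ, D * ((n : ℝ) ^ m * r ^ n)
      ≤ D * (m.factorial / (r * a ^ (m + 1))) := by
    rw [tsum_mul_left]
    exact mul_le_mul_of_nonneg_left (aux_tsum_le m hr0 hr1) hD.le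
  have hfacpos : (0:ℝ) < (Nat.factorial m : ℝ) := by positivity
  have hfinal : (1 / (Nat.factorial m : ℝ)) * (∑' n : ℤ, h n)
      ≤ 2 * D / r * a ^ (-(m : ℤ) - 1) := by
    have hz : a ^ (-(m : ℤ) - 1) = (a ^ (m + 1))⁻¹ := by
      rw [show (-(m : ℤ) - 1) = -((m : ℕ) + 1 : ℕ) by push_cast; ring,
        zpow_neg, zpow_natCast]
    rw [hz]
    calc (1 / (Nat.factorial m : ℝ)) * (∑' n : ℤ, h n)
        ≤ (1 / (Nat.factorial m : ℝ)) * (2 * (D * (m.factorial / (r * a ^ (m + 1))))) := by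
          apply mul_le_mul_of_nonneg_left _ (by positivity)
          calc ∑' n : ℤ, h n ≤ 2 * ∑' n : ℕ, D * ((n : ℝ) ^ m * r ^ n) := htsumZ
            _ ≤ 2 * (D * (m.factorial / (r * a ^ (m + 1)))) := by linarith [hbound]
      _ = 2 * D / r * (a ^ (m + 1))⁻¹ := by
          field_simp
  calc (1 / (Nat.factorial m : ℝ)) * ‖∑' n : ℤ, (Complex.I * (n : ℂ)) ^ m * g n‖
      ≤ (1 / (Nat.factorial m : ℝ)) * (∑' n : ℤ, h n) := by
        apply mul_le_mul_of_nonneg_left hnorm (by positivity)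
    _ ≤ 2 * D / r * a ^ (-(m : ℤ) - 1) := hfinal
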